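/- Let σ₀ ∈ (1/2, 1) be fixed, and let a_L : {primes} → ℂ and κ > 0 be such that for every A > 0 one has ∑_{p ≤ x} |a_L(p)|² = κ·Li(x) + O_A(x/(log x)^A). Then as ρ → ∞, ∑_{e^{−1}ρ ≤ p ≤ eρ} |a_L(p)|²·w_p/p^{σ₀} = C_{σ₀}·κ·ρ^{1−σ₀}/log ρ + O(ρ^{1−σ₀}/(log ρ)²), where C_{σ₀} = (2·sinh((1−σ₀)/2)/(1−σ₀))². -/

import Mathlib

open Filter Real Set Asymptotics Finset

/-- The logarithmic integral `Li(x) = ∫_2^x dt / log t`. -/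
noncomputable def Li (x : ℝ) : ℝ := ∫ t in (2 : ℝ)..x, 1 / Real.log t

/-- The finite set of primes `p ≤ x`. -/
noncomputable def primesUpTo (x : ℝ) : Finset ℕ :=
  (Finset.Iic ⌊x⌋₊).filter Nat.Prime

open scoped Classical in
/-- The finite set of primes `p` with `e⁻¹ ρ ≤ p ≤ e ρ`. -/
noncomputable def primesNear (ρ : ℝ) : Finset ℕ :=
  (Finset.Iic ⌊Real.exp 1 * ρ⌋₊).filter
    (fun p => p.Prime ∧ Real.exp (-1) * ρ ≤ (p : ℝ) ∧ (p : ℝ) ≤ Real.exp 1 * ρ)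

open scoped Classical in
/-- The finite set of primes `p` with `a ρ ≤ p ≤ b ρ`. -/
noncomputable def primesIn (a b ρ : ℝ) : Finset ℕ :=
  (Finset.Iic ⌊b * ρ⌋₊).filter
    (fun p => p.Prime ∧ a * ρ ≤ (p : ℝ) ∧ (p : ℝ) ≤ b * ρ)

/-- The weight `w_p = 1 - |log (p/ρ)|`. -/
noncomputable def weight (ρ : ℝ) (p : ℕ) : ℝ := 1 - |Real.log ((p : ℝ) / ρ)|

/-- The constant `C_{σ₀} = (2 sinh((1-σ₀)/2) / (1-σ₀))²`. -/
noncomputable def Csigma (σ₀ : ℝ) : ℝ := (2 * Real.sinh ((1 - σ₀) / 2) / (1 - σ₀)) ^ 2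

/-- The strong Selberg orthonormality condition for a family of coefficient
sequences `a_1, …, a_k` with constants `κ_1, …, κ_k`. -/
def SSOC {k : ℕ} (a : Fin k → ℕ → ℂ) (κ : Fin k → ℝ) : Prop :=
  ∀ i j : Fin k, ∀ A : ℝ, 0 < A →
    (fun x : ℝ => (∑ p ∈ primesUpTo x, a i p * (starRingEnd ℂ) (a j p)) -
      (if i = j then (κ j : ℂ) * (Li x : ℂ) else 0)) =O[atTop]
    (fun x : ℝ => x / (Real.log x) ^ A)

section auxlemmas

open intervalIntegral MeasureTheory

lemma hasDerivAt_Li {x : ℝ} (hx : 1 < x) : HasDerivAt Li (1 / Real.log x) x := by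
  have hc : ContinuousOn (fun t : ℝ => 1 / Real.log t) (Set.Ioi 1) := by
    apply continuousOn_const.div
    · exact Real.continuousOn_log.mono (fun t ht => by
        simp only [Set.mem_compl_iff, Set.mem_singleton_iff]
        exact ne_of_gt (lt_trans one_pos (Set.mem_Ioi.mp ht)))
    · exact fun t ht => ne_of_gt (Real.log_pos (Set.mem_Ioi.mp ht))
  apply intervalIntegral.integral_hasDerivAt_right
  · apply ContinuousOn.intervalIntegrable
    exact hc.mono (fun t ht => lt_of_lt_of_le (lt_min one_lt_two hx) ht.1)
  · exact ((measurable_const.div Real.measurable_log).stronglyMeasurable.stronglyMeasurableAtFilter)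
  · exact hc.continuousAt (Ioi_mem_nhds hx)

/-- the smooth pieces of the weighted summand : `(1 + ε(log t - log ρ)) t^{-σ}` -/
noncomputable def phi (σ ε ρ t : ℝ) : ℝ := (1 + ε * (Real.log t - Real.log ρ)) * t ^ (-σ)

noncomputable def phi' (σ ε ρ t : ℝ) : ℝ :=
  (ε - σ * (1 + ε * (Real.log t - Real.log ρ))) * t ^ (-σ - 1)

noncomputable def phiF (σ ε ρ t : ℝ) : ℝ :=
  t ^ (1 - σ) / (1 - σ) * (1 + ε * (Real.log t - Real.log ρ) - ε / (1 - σ))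

lemma hasDerivAt_phi (σ ε ρ : ℝ) {t : ℝ} (ht : 0 < t) :
    HasDerivAt (phi σ ε ρ) (phi' σ ε ρ t) t := by
  have h1 : HasDerivAt (fun t : ℝ => 1 + ε * (Real.log t - Real.log ρ)) (ε / t) t := by
    simpa [div_eq_mul_inv] using (((Real.hasDerivAt_log ht.ne').sub_const (Real.log ρ)).const_mul ε).const_add 1
  have h2 : HasDerivAt (fun t : ℝ => t ^ (-σ)) (-σ * t ^ (-σ - 1)) t :=
    Real.hasDerivAt_rpow_const (Or.inl ht.ne')
  have := h1.mul h2
  refine this.congr_deriv ?_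
  have ht' : t ^ (-σ) / t = t ^ (-σ - 1) := by
    rw [Real.rpow_sub ht, Real.rpow_one]
  rw [phi', ← ht']
  ring

lemma hasDerivAt_phiF (σ ε ρ : ℝ) (hσ : σ ≠ 1) {t : ℝ} (ht : 0 < t) :
    HasDerivAt (phiF σ ε ρ) (phi σ ε ρ t) t := by
  have h1 : HasDerivAt (fun t : ℝ => t ^ (1 - σ) / (1 - σ))
      ((1 - σ) * t ^ (-σ) / (1 - σ)) t := by
    have := (Real.hasDerivAt_rpow_const (p := 1 - σ) (Or.inl ht.ne'))
    have e : (1 : ℝ) - σ - 1 = -σ := by ring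
    rw [e] at this
    exact this.div_const _
  have h2 : HasDerivAt (fun t : ℝ => 1 + ε * (Real.log t - Real.log ρ) - ε / (1 - σ))
      (ε / t) t := by
    simpa [div_eq_mul_inv] using ((((Real.hasDerivAt_log ht.ne').sub_const (Real.log ρ)).const_mul ε).const_add
      1).sub_const (ε / (1 - σ))
  have := h1.mul h2
  refine this.congr_deriv ?_
  have hσ' : (1 : ℝ) - σ ≠ 0 := sub_ne_zero.mpr (Ne.symm hσ)
  have key : t ^ (1 - σ) = t ^ (-σ) * t := by
    rw [show (1:ℝ) - σ = -σ + 1 by ring, Real.rpow_add_one ht.ne']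
  rw [key, phi]
  field_simp
  ring

lemma continuousOn_phi (σ ε ρ : ℝ) {s : Set ℝ} (hs : ∀ t ∈ s, (0:ℝ) < t) :
    ContinuousOn (phi σ ε ρ) s := fun t ht =>
  ((hasDerivAt_phi σ ε ρ (hs t ht)).differentiableAt.continuousAt).continuousWithinAt

lemma continuousOn_phi' (σ ε ρ : ℝ) {s : Set ℝ} (hs : ∀ t ∈ s, (0:ℝ) < t) :
    ContinuousOn (phi' σ ε ρ) s := by
  apply ContinuousOn.mul
  · apply ContinuousOn.sub continuousOn_const
    apply ContinuousOn.mul continuousOn_const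
    apply ContinuousOn.add continuousOn_const
    apply ContinuousOn.mul continuousOn_const
    exact ContinuousOn.sub
      (Real.continuousOn_log.mono (fun t ht => ne_of_gt (hs t ht))) continuousOn_const
  · exact fun t ht => (Real.continuousAt_rpow_const t _ (Or.inl (hs t ht).ne')).continuousWithinAt

lemma phi_integral (σ ρ : ℝ) (hσ : σ ∈ Set.Ioo (1/2:ℝ) 1) (hρ : 0 < ρ) :
    (∫ t in (Real.exp (-1) * ρ)..ρ, phi σ 1 ρ t)
      + (∫ t in ρ..(Real.exp 1 * ρ), phi σ (-1) ρ t) = Csigma σ * ρ ^ (1 - σ) := by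
  have hexp1 : Real.exp (-1) ≤ 1 := by
    rw [← Real.exp_zero]; exact Real.exp_le_exp.mpr (by norm_num)
  have hexp2 : (1:ℝ) ≤ Real.exp 1 := by linarith [Real.add_one_le_exp (1:ℝ)]
  have he1 : Real.exp (-1) * ρ ≤ ρ := by nlinarith
  have he2 : ρ ≤ Real.exp 1 * ρ := by nlinarith
  have ha : (0:ℝ) < Real.exp (-1) * ρ := mul_pos (Real.exp_pos _) hρ
  have hσ1 : σ ≠ 1 := ne_of_lt hσ.2
  have hI1 : (∫ t in (Real.exp (-1) * ρ)..ρ, phi σ 1 ρ t)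
      = phiF σ 1 ρ ρ - phiF σ 1 ρ (Real.exp (-1) * ρ) := by
    refine intervalIntegral.integral_eq_sub_of_hasDerivAt (f := phiF σ 1 ρ) ?_ ?_
    · intro t ht
      rw [Set.uIcc_of_le he1] at ht
      exact hasDerivAt_phiF σ 1 ρ hσ1 (lt_of_lt_of_le ha ht.1)
    · apply ContinuousOn.intervalIntegrable
      apply continuousOn_phi
      intro t ht
      rw [Set.uIcc_of_le he1] at ht
      exact lt_of_lt_of_le ha ht.1
  have hI2 : (∫ t in ρ..(Real.exp 1 * ρ), phi σ (-1) ρ t)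
      = phiF σ (-1) ρ (Real.exp 1 * ρ) - phiF σ (-1) ρ ρ := by
    refine intervalIntegral.integral_eq_sub_of_hasDerivAt (f := phiF σ (-1) ρ) ?_ ?_
    · intro t ht
      rw [Set.uIcc_of_le he2] at ht
      exact hasDerivAt_phiF σ (-1) ρ hσ1 (lt_of_lt_of_le hρ ht.1)
    · apply ContinuousOn.intervalIntegrable
      apply continuousOn_phi
      intro t ht
      rw [Set.uIcc_of_le he2] at ht
      exact lt_of_lt_of_le hρ ht.1
  rw [hI1, hI2]
  set c : ℝ := 1 - σ with hc
  have hc0 : c ≠ 0 := sub_ne_zero.mpr (Ne.symm hσ1)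
  have hcpos : 0 < c := by simp [hc]; linarith [hσ.2]
  have hlog1 : Real.log (Real.exp (-1) * ρ) - Real.log ρ = -1 := by
    rw [Real.log_mul (Real.exp_ne_zero _) hρ.ne', Real.log_exp]; ring
  have hlog2 : Real.log (Real.exp 1 * ρ) - Real.log ρ = 1 := by
    rw [Real.log_mul (Real.exp_ne_zero _) hρ.ne', Real.log_exp]; ring
  have hr1 : (Real.exp (-1) * ρ) ^ c = Real.exp (-c) * ρ ^ c := by
    rw [Real.mul_rpow (Real.exp_pos _).le hρ.le, ← Real.exp_one_rpow (-1),
      ← Real.rpow_mul (Real.exp_pos _).le, Real.exp_one_rpow]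
    norm_num
  have hr2 : (Real.exp 1 * ρ) ^ c = Real.exp c * ρ ^ c := by
    rw [Real.mul_rpow (Real.exp_pos _).le hρ.le, Real.exp_one_rpow]
  simp only [phiF, ← hc, hlog1, hlog2, hr1, hr2, sub_self, Csigma, Real.sinh_eq]
  set X := Real.exp (c/2) with hX
  have hXpos := Real.exp_pos (c/2)
  have hXY : Real.exp (-(c/2)) = X⁻¹ := by rw [hX, ← Real.exp_neg]
  have hX2 : Real.exp c = X ^ 2 := by rw [hX, sq, ← Real.exp_add]; ring_nf
  have hY2 : Real.exp (-c) = (X ^ 2)⁻¹ := by rw [← hX2, ← Real.exp_neg]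
  rw [hXY, hX2, hY2]
  field_simp [show X ≠ 0 from hXpos.ne']
  ring

end auxlemmas

set_option maxHeartbeats 4000000 in
/-- Asymptotics for the weighted sum `∑_{e⁻¹ρ ≤ p ≤ eρ} |a_L(p)|² w_p / p^{σ₀}`. -/
theorem sum_sq_weighted (σ₀ : ℝ) (hσ : σ₀ ∈ Set.Ioo (1/2 : ℝ) 1)
    (aL : ℕ → ℂ) (κ : ℝ) (hκ : 0 < κ)
    (h : ∀ A : ℝ, 0 < A →
      (fun x : ℝ => (∑ p ∈ primesUpTo x, ‖aL p‖ ^ 2) - κ * Li x) =O[atTop]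
        (fun x : ℝ => x / (Real.log x) ^ A)) :
    (fun ρ : ℝ => (∑ p ∈ primesNear ρ, ‖aL p‖ ^ 2 * weight ρ p / (p : ℝ) ^ σ₀) -
        Csigma σ₀ * κ * ρ ^ (1 - σ₀) / Real.log ρ)
      =O[atTop] (fun ρ : ℝ => ρ ^ (1 - σ₀) / (Real.log ρ) ^ 2) := by
  classical
  obtain ⟨hσl, hσu⟩ := hσ
  have hσ0 : 0 < σ₀ := by linarith
  obtain ⟨K, hKev⟩ := (h 2 two_pos).bound
  obtain ⟨x₀, hx₀⟩ := Filter.eventually_atTop.mp hKev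
  rw [Asymptotics.isBigO_iff]
  refine ⟨48 * κ + 1296 * |K| + 1, ?_⟩
  rw [Filter.eventually_atTop]
  refine ⟨max (Real.exp 1 * (max x₀ 3)) (Real.exp 2), fun ρ hρR => ?_⟩
  -- basic facts about ρ and the endpoints
  have hρe2 : Real.exp 2 ≤ ρ := le_trans (le_max_right _ _) hρR
  have hρpos : 0 < ρ := lt_of_lt_of_le (Real.exp_pos 2) hρe2
  have hL2 : 2 ≤ Real.log ρ := (Real.le_log_iff_exp_le hρpos).mpr hρe2
  set L := Real.log ρ with hLdef
  have hLpos : 0 < L := by linarith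
  set a := Real.exp (-1) * ρ with hadef
  set b := Real.exp 1 * ρ with hbdef
  have hexp1 : Real.exp (-1) ≤ 1 := by
    rw [← Real.exp_zero]; exact Real.exp_le_exp.mpr (by norm_num)
  have hexp2 : (1:ℝ) ≤ Real.exp 1 := by linarith [Real.add_one_le_exp (1:ℝ)]
  have he3 : Real.exp 1 ≤ 3 := by
    have := Real.exp_one_lt_d9; linarith
  have hapos : 0 < a := mul_pos (Real.exp_pos _) hρpos
  have hax : max x₀ 3 ≤ a := by
    have h1 : Real.exp 1 * max x₀ 3 ≤ ρ := le_trans (le_max_left _ _) hρR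
    have h2 : max x₀ 3 = Real.exp (-1) * (Real.exp 1 * max x₀ 3) := by
      rw [← mul_assoc, ← Real.exp_add]; norm_num
    rw [h2, hadef]
    exact mul_le_mul_of_nonneg_left h1 (Real.exp_pos _).le
  have ha3 : (3:ℝ) ≤ a := le_trans (le_max_right _ _) hax
  have hax₀ : x₀ ≤ a := le_trans (le_max_left _ _) hax
  have hea : a ≤ ρ := by rw [hadef]; nlinarith
  have heb : ρ ≤ b := by rw [hbdef]; nlinarith
  have hb3 : b ≤ 3 * ρ := by rw [hbdef]; nlinarith
  have hloga : Real.log a = L - 1 := by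
    rw [hadef, Real.log_mul (Real.exp_ne_zero _) hρpos.ne', Real.log_exp, hLdef]; ring
  have hlogb : Real.log b = L + 1 := by
    rw [hbdef, Real.log_mul (Real.exp_ne_zero _) hρpos.ne', Real.log_exp, hLdef]; ring
  -- rpow facts
  have hrpowa : ∀ w : ℝ, a ^ w = Real.exp (-w) * ρ ^ w := by
    intro w
    rw [hadef, Real.mul_rpow (Real.exp_pos _).le hρpos.le, ← Real.exp_one_rpow (-1),
      ← Real.rpow_mul (Real.exp_pos _).le, Real.exp_one_rpow]
    ring_nf
  have hrr1 : ρ ^ (-σ₀) * ρ = ρ ^ (1 - σ₀) := by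
    rw [show (1:ℝ) - σ₀ = -σ₀ + 1 by ring, Real.rpow_add_one hρpos.ne']
  have hrr2 : ρ ^ (-σ₀ - 1) * ρ * ρ = ρ ^ (1 - σ₀) := by
    rw [show (1:ℝ) - σ₀ = (-σ₀ - 1) + 1 + 1 by ring, Real.rpow_add_one (by positivity),
      Real.rpow_add_one hρpos.ne']
  have hexpσ : Real.exp σ₀ ≤ 3 := le_trans (Real.exp_le_exp.mpr hσu.le) he3
  have hexpσ1 : Real.exp (σ₀ + 1) ≤ 9 := by
    rw [Real.exp_add]
    nlinarith [Real.exp_pos σ₀, Real.exp_pos 1]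
  have hρσpos : (0:ℝ) < ρ ^ (-σ₀) := Real.rpow_pos_of_pos hρpos _
  have hρσ1pos : (0:ℝ) < ρ ^ (-σ₀ - 1) := Real.rpow_pos_of_pos hρpos _
  -- the coefficient sequence and the counting functions
  set cseq : ℕ → ℝ := fun n => if n.Prime then ‖aL n‖ ^ 2 else 0 with hcseq
  have hcseq_nonneg : ∀ n, 0 ≤ cseq n := by
    intro n; rw [hcseq]; dsimp only; split <;> positivity
  set N : ℝ → ℝ := fun x => ∑ k ∈ Finset.Icc 0 ⌊x⌋₊, cseq k with hNdef
  have hNsum : ∀ x : ℝ, N x = ∑ p ∈ primesUpTo x, ‖aL p‖ ^ 2 := by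
    intro x
    have hIcc : Finset.Icc 0 ⌊x⌋₊ = Finset.Iic ⌊x⌋₊ := by ext k; simp
    rw [hNdef]; dsimp only
    rw [hIcc, primesUpTo, Finset.sum_filter]
  set E : ℝ → ℝ := fun x => N x - κ * Li x with hEdef
  have hE : ∀ t : ℝ, x₀ ≤ t → 0 ≤ t → |E t| ≤ |K| * (t / (Real.log t) ^ 2) := by
    intro t h1 h2
    have h3 := hx₀ t h1
    rw [← hNsum t] at h3
    rw [show ((2:ℝ)) = ((2:ℕ):ℝ) by norm_num, Real.rpow_natCast] at h3
    calc |E t| = ‖N t - κ * Li t‖ := rfl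
      _ ≤ K * ‖t / (Real.log t) ^ 2‖ := h3
      _ ≤ |K| * |t / (Real.log t) ^ 2| := by
          rw [Real.norm_eq_abs]
          exact mul_le_mul_of_nonneg_right (le_abs_self K) (abs_nonneg (t / Real.log t ^ 2))
      _ = |K| * (t / (Real.log t) ^ 2) := by
          rw [abs_of_nonneg (div_nonneg h2 (sq_nonneg _))]
  have hNmono : Monotone N := by
    intro x y hxy
    exact Finset.sum_le_sum_of_subset_of_nonneg
      (Finset.Icc_subset_Icc le_rfl (Nat.floor_le_floor hxy)) (fun i _ _ => hcseq_nonneg i)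
  -- splitting the sum over primesNear into two Ioc-sums
  have hsplit : (∑ p ∈ primesNear ρ, ‖aL p‖ ^ 2 * weight ρ p / (p : ℝ) ^ σ₀)
      = (∑ k ∈ Finset.Ioc ⌊a⌋₊ ⌊ρ⌋₊, phi σ₀ 1 ρ k * cseq k)
        + (∑ k ∈ Finset.Ioc ⌊ρ⌋₊ ⌊b⌋₊, phi σ₀ (-1) ρ k * cseq k) := by
    have hfl1 : ⌊a⌋₊ ≤ ⌊ρ⌋₊ := Nat.floor_le_floor hea
    have hfl2 : ⌊ρ⌋₊ ≤ ⌊b⌋₊ := Nat.floor_le_floor heb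
    have hterm1 : ∀ k ∈ Finset.Ioc ⌊a⌋₊ ⌊ρ⌋₊, phi σ₀ 1 ρ k * cseq k
        = if k.Prime then ‖aL k‖ ^ 2 * weight ρ k / (k : ℝ) ^ σ₀ else 0 := by
      intro k hk
      rw [Finset.mem_Ioc] at hk
      have hka : a < (k:ℝ) := (Nat.floor_lt hapos.le).mp hk.1
      have hkρ : (k:ℝ) ≤ ρ := le_trans (Nat.cast_le.mpr hk.2) (Nat.floor_le hρpos.le)
      have hkpos : (0:ℝ) < k := lt_trans hapos hka
      rw [hcseq]; dsimp only
      split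
      · have hw : weight ρ k = 1 + (Real.log k - L) := by
          rw [weight, Real.log_div hkpos.ne' hρpos.ne']
          rw [abs_of_nonpos (by
            have := Real.log_le_log hkpos hkρ
            rw [← hLdef] at this; linarith)]
          ring
        rw [hw, phi]
        rw [Real.rpow_neg hkpos.le]
        field_simp
        ring
      · ring
    have hterm2 : ∀ k ∈ Finset.Ioc ⌊ρ⌋₊ ⌊b⌋₊, phi σ₀ (-1) ρ k * cseq k
        = if k.Prime then ‖aL k‖ ^ 2 * weight ρ k / (k : ℝ) ^ σ₀ else 0 := by
      intro k hk
      rw [Finset.mem_Ioc] at hk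
      have hkρ : ρ < (k:ℝ) := (Nat.floor_lt hρpos.le).mp hk.1
      have hkb : (k:ℝ) ≤ b := le_trans (Nat.cast_le.mpr hk.2)
        (Nat.floor_le (le_trans hρpos.le heb))
      have hkpos : (0:ℝ) < k := lt_trans hρpos hkρ
      rw [hcseq]; dsimp only
      split
      · have hw : weight ρ k = 1 - (Real.log k - L) := by
          rw [weight, Real.log_div hkpos.ne' hρpos.ne']
          rw [abs_of_nonneg (by
            have := Real.log_le_log hρpos hkρ.le
            rw [← hLdef] at this; linarith)]
        rw [hw, phi]
        rw [Real.rpow_neg hkpos.le]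
        field_simp
        ring
      · ring
    rw [Finset.sum_congr rfl hterm1, Finset.sum_congr rfl hterm2,
      Finset.sum_Ioc_consecutive _ hfl1 hfl2, ← Finset.sum_filter]
    symm
    apply Finset.sum_subset
    · intro p hp
      rw [Finset.mem_filter, Finset.mem_Ioc] at hp
      obtain ⟨⟨hp1, hp2⟩, hp3⟩ := hp
      rw [primesNear, Finset.mem_filter, Finset.mem_Iic]
      refine ⟨hp2, hp3, le_of_lt ((Nat.floor_lt hapos.le).mp hp1), ?_⟩
      exact le_trans (Nat.cast_le.mpr hp2) (Nat.floor_le (le_trans hρpos.le heb))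
    · intro p hp hnp
      rw [primesNear, Finset.mem_filter, Finset.mem_Iic] at hp
      obtain ⟨hp1, hp2, hp3, hp4⟩ := hp
      rw [Finset.mem_filter, Finset.mem_Ioc] at hnp
      push_neg at hnp
      have hple : p ≤ ⌊b⌋₊ := Nat.le_floor hp4
      have : ¬ ⌊a⌋₊ < p := by
        intro hcon
        exact (hnp ⟨hcon, hple⟩) hp2
      have hpa : (p:ℝ) ≤ a := le_trans (Nat.cast_le.mpr (not_lt.mp this)) (Nat.floor_le hapos.le)
      have hpa' : (p:ℝ) = a := le_antisymm hpa hp3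
      have hwz : weight ρ p = 0 := by
        rw [weight, hpa', hadef, show Real.exp (-1) * ρ / ρ = Real.exp (-1) by
          field_simp]
        rw [Real.log_exp]
        norm_num
      rw [hwz]
      simp
  -- Abel summation on the two pieces
  have hderiv_eq1 : ∀ t ∈ Set.Icc a ρ, deriv (phi σ₀ 1 ρ) t = phi' σ₀ 1 ρ t := fun t ht =>
    (hasDerivAt_phi σ₀ 1 ρ (lt_of_lt_of_le hapos ht.1)).deriv
  have hderiv_eq2 : ∀ t ∈ Set.Icc ρ b, deriv (phi σ₀ (-1) ρ) t = phi' σ₀ (-1) ρ t := fun t ht =>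
    (hasDerivAt_phi σ₀ (-1) ρ (lt_of_lt_of_le hρpos ht.1)).deriv
  have hint1 : MeasureTheory.IntegrableOn (deriv (phi σ₀ 1 ρ)) (Set.Icc a ρ) := by
    refine MeasureTheory.IntegrableOn.congr_fun ?_ (fun t ht => (hderiv_eq1 t ht).symm)
      measurableSet_Icc
    exact (continuousOn_phi' σ₀ 1 ρ (fun t ht => lt_of_lt_of_le hapos ht.1)).integrableOn_Icc
  have hint2 : MeasureTheory.IntegrableOn (deriv (phi σ₀ (-1) ρ)) (Set.Icc ρ b) := by
    refine MeasureTheory.IntegrableOn.congr_fun ?_ (fun t ht => (hderiv_eq2 t ht).symm)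
      measurableSet_Icc
    exact (continuousOn_phi' σ₀ (-1) ρ (fun t ht => lt_of_lt_of_le hρpos ht.1)).integrableOn_Icc
  have habel1 := sum_mul_eq_sub_sub_integral_mul cseq (f := phi σ₀ 1 ρ) hapos.le hea
    (fun t ht => (hasDerivAt_phi σ₀ 1 ρ (lt_of_lt_of_le hapos ht.1)).differentiableAt) hint1
  have habel2 := sum_mul_eq_sub_sub_integral_mul cseq (f := phi σ₀ (-1) ρ) (le_trans hapos.le hea)
    heb (fun t ht => (hasDerivAt_phi σ₀ (-1) ρ (lt_of_lt_of_le hρpos ht.1)).differentiableAt) hint2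
  have hIoc_int1 : ∫ t in Set.Ioc a ρ, deriv (phi σ₀ 1 ρ) t * (∑ k ∈ Finset.Icc 0 ⌊t⌋₊, cseq k)
      = ∫ t in Set.Ioc a ρ, phi' σ₀ 1 ρ t * N t := by
    refine MeasureTheory.setIntegral_congr_fun measurableSet_Ioc (fun t ht => ?_)
    rw [hderiv_eq1 t ⟨ht.1.le, ht.2⟩]
  have hIoc_int2 : ∫ t in Set.Ioc ρ b, deriv (phi σ₀ (-1) ρ) t * (∑ k ∈ Finset.Icc 0 ⌊t⌋₊, cseq k)
      = ∫ t in Set.Ioc ρ b, phi' σ₀ (-1) ρ t * N t := by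
    refine MeasureTheory.setIntegral_congr_fun measurableSet_Ioc (fun t ht => ?_)
    rw [hderiv_eq2 t ⟨ht.1.le, ht.2⟩]
  rw [hIoc_int1] at habel1
  rw [hIoc_int2] at habel2
  -- boundary values
  have hphia : phi σ₀ 1 ρ a = 0 := by
    show (1 + 1 * (Real.log a - Real.log ρ)) * a ^ (-σ₀) = 0
    rw [hloga, ← hLdef]; ring
  have hphib : phi σ₀ (-1) ρ b = 0 := by
    show (1 + (-1) * (Real.log b - Real.log ρ)) * b ^ (-σ₀) = 0
    rw [hlogb, ← hLdef]; ring
  have hphiρ : phi σ₀ 1 ρ ρ = phi σ₀ (-1) ρ ρ := by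
    show (1 + 1 * (Real.log ρ - Real.log ρ)) * ρ ^ (-σ₀)
      = (1 + (-1) * (Real.log ρ - Real.log ρ)) * ρ ^ (-σ₀)
    ring
  -- continuity facts
  have h1a : (1:ℝ) < a := by linarith
  have hlicont : ∀ t : ℝ, a ≤ t → ContinuousWithinAt Li (Set.Icc a ρ ∪ Set.Icc ρ b) t := by
    intro t ht
    exact ((hasDerivAt_Li (lt_of_lt_of_le h1a ht)).differentiableAt.continuousAt).continuousWithinAt
  have hLicont1 : ContinuousOn Li (Set.Icc a ρ) := fun t ht =>
    ((hasDerivAt_Li (lt_of_lt_of_le h1a ht.1)).differentiableAt.continuousAt).continuousWithinAt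
  have hLicont2 : ContinuousOn Li (Set.Icc ρ b) := fun t ht =>
    ((hasDerivAt_Li (lt_of_lt_of_le h1a (le_trans hea ht.1))).differentiableAt.continuousAt).continuousWithinAt
  have hclog : ContinuousOn (fun t : ℝ => 1 / Real.log t) (Set.Ioi (1:ℝ)) := by
    apply continuousOn_const.div
    · exact Real.continuousOn_log.mono (fun t ht => by
        simp only [Set.mem_compl_iff, Set.mem_singleton_iff]
        exact ne_of_gt (lt_trans one_pos (Set.mem_Ioi.mp ht)))
    · exact fun t ht => ne_of_gt (Real.log_pos (Set.mem_Ioi.mp ht))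
  -- integrability of the various products
  have hphiLi_int1 : MeasureTheory.IntegrableOn (fun t => phi' σ₀ 1 ρ t * Li t) (Set.Icc a ρ) :=
    ((continuousOn_phi' σ₀ 1 ρ (fun t ht => lt_of_lt_of_le hapos ht.1)).mul
      hLicont1).integrableOn_Icc
  have hphiLi_int2 : MeasureTheory.IntegrableOn (fun t => phi' σ₀ (-1) ρ t * Li t)
      (Set.Icc ρ b) :=
    ((continuousOn_phi' σ₀ (-1) ρ (fun t ht => lt_of_lt_of_le hρpos ht.1)).mul
      hLicont2).integrableOn_Icc
  have hNint1 : MeasureTheory.IntegrableOn N (Set.Icc a ρ) :=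
    (hNmono.monotoneOn _).integrableOn_isCompact isCompact_Icc
  have hNint2 : MeasureTheory.IntegrableOn N (Set.Icc ρ b) :=
    (hNmono.monotoneOn _).integrableOn_isCompact isCompact_Icc
  have hphiN_int1 : MeasureTheory.IntegrableOn (fun t => phi' σ₀ 1 ρ t * N t) (Set.Icc a ρ) :=
    MeasureTheory.IntegrableOn.continuousOn_mul
      (continuousOn_phi' σ₀ 1 ρ (fun t ht => lt_of_lt_of_le hapos ht.1)) hNint1 isCompact_Icc
  have hphiN_int2 : MeasureTheory.IntegrableOn (fun t => phi' σ₀ (-1) ρ t * N t) (Set.Icc ρ b) :=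
    MeasureTheory.IntegrableOn.continuousOn_mul
      (continuousOn_phi' σ₀ (-1) ρ (fun t ht => lt_of_lt_of_le hρpos ht.1)) hNint2 isCompact_Icc
  have hEint1 : MeasureTheory.IntegrableOn (fun t => phi' σ₀ 1 ρ t * E t) (Set.Ioc a ρ) := by
    refine MeasureTheory.IntegrableOn.congr_fun
      (MeasureTheory.IntegrableOn.mono_set (hphiN_int1.sub (hphiLi_int1.const_mul κ))
        Set.Ioc_subset_Icc_self)
      (fun t ht => ?_) measurableSet_Ioc
    show phi' σ₀ 1 ρ t * N t - κ * (phi' σ₀ 1 ρ t * Li t) = phi' σ₀ 1 ρ t * E t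
    rw [hEdef]; ring
  have hEint2 : MeasureTheory.IntegrableOn (fun t => phi' σ₀ (-1) ρ t * E t) (Set.Ioc ρ b) := by
    refine MeasureTheory.IntegrableOn.congr_fun
      (MeasureTheory.IntegrableOn.mono_set (hphiN_int2.sub (hphiLi_int2.const_mul κ))
        Set.Ioc_subset_Icc_self)
      (fun t ht => ?_) measurableSet_Ioc
    show phi' σ₀ (-1) ρ t * N t - κ * (phi' σ₀ (-1) ρ t * Li t) = phi' σ₀ (-1) ρ t * E t
    rw [hEdef]; ring
  -- decompose the Stieltjes integrals
  have hdecomp1 : ∫ t in Set.Ioc a ρ, phi' σ₀ 1 ρ t * N t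
      = κ * (∫ t in a..ρ, phi' σ₀ 1 ρ t * Li t) + ∫ t in Set.Ioc a ρ, phi' σ₀ 1 ρ t * E t := by
    rw [intervalIntegral.integral_of_le hea, ← MeasureTheory.integral_const_mul,
      ← MeasureTheory.integral_add ((MeasureTheory.IntegrableOn.mono_set hphiLi_int1 Set.Ioc_subset_Icc_self).const_mul κ)
        hEint1]
    refine MeasureTheory.setIntegral_congr_fun measurableSet_Ioc (fun t ht => ?_)
    show phi' σ₀ 1 ρ t * N t = κ * (phi' σ₀ 1 ρ t * Li t) + phi' σ₀ 1 ρ t * E t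
    rw [hEdef]; ring
  have hdecomp2 : ∫ t in Set.Ioc ρ b, phi' σ₀ (-1) ρ t * N t
      = κ * (∫ t in ρ..b, phi' σ₀ (-1) ρ t * Li t)
        + ∫ t in Set.Ioc ρ b, phi' σ₀ (-1) ρ t * E t := by
    rw [intervalIntegral.integral_of_le heb, ← MeasureTheory.integral_const_mul,
      ← MeasureTheory.integral_add ((MeasureTheory.IntegrableOn.mono_set hphiLi_int2 Set.Ioc_subset_Icc_self).const_mul κ)
        hEint2]
    refine MeasureTheory.setIntegral_congr_fun measurableSet_Ioc (fun t ht => ?_)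
    show phi' σ₀ (-1) ρ t * N t = κ * (phi' σ₀ (-1) ρ t * Li t) + phi' σ₀ (-1) ρ t * E t
    rw [hEdef]; ring
  -- integration by parts against Li
  have hparts1 : ∫ t in a..ρ, phi σ₀ 1 ρ t * (1 / Real.log t)
      = phi σ₀ 1 ρ ρ * Li ρ - phi σ₀ 1 ρ a * Li a - ∫ t in a..ρ, phi' σ₀ 1 ρ t * Li t := by
    apply intervalIntegral.integral_mul_deriv_eq_deriv_mul
    · intro t ht
      rw [Set.uIcc_of_le hea] at ht
      exact hasDerivAt_phi σ₀ 1 ρ (lt_of_lt_of_le hapos ht.1)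
    · intro t ht
      rw [Set.uIcc_of_le hea] at ht
      exact hasDerivAt_Li (lt_of_lt_of_le h1a ht.1)
    · apply ContinuousOn.intervalIntegrable
      apply continuousOn_phi'
      intro t ht
      rw [Set.uIcc_of_le hea] at ht
      exact lt_of_lt_of_le hapos ht.1
    · apply ContinuousOn.intervalIntegrable
      apply hclog.mono
      intro t ht
      rw [Set.uIcc_of_le hea] at ht
      exact lt_of_lt_of_le h1a ht.1
  have hparts2 : ∫ t in ρ..b, phi σ₀ (-1) ρ t * (1 / Real.log t)
      = phi σ₀ (-1) ρ b * Li b - phi σ₀ (-1) ρ ρ * Li ρ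
        - ∫ t in ρ..b, phi' σ₀ (-1) ρ t * Li t := by
    apply intervalIntegral.integral_mul_deriv_eq_deriv_mul
    · intro t ht
      rw [Set.uIcc_of_le heb] at ht
      exact hasDerivAt_phi σ₀ (-1) ρ (lt_of_lt_of_le hρpos ht.1)
    · intro t ht
      rw [Set.uIcc_of_le heb] at ht
      exact hasDerivAt_Li (lt_of_lt_of_le h1a (le_trans hea ht.1))
    · apply ContinuousOn.intervalIntegrable
      apply continuousOn_phi'
      intro t ht
      rw [Set.uIcc_of_le heb] at ht
      exact lt_of_lt_of_le hρpos ht.1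
    · apply ContinuousOn.intervalIntegrable
      apply hclog.mono
      intro t ht
      rw [Set.uIcc_of_le heb] at ht
      exact lt_of_lt_of_le h1a (le_trans hea ht.1)
  -- extract the main term 1/L from 1/log t
  have hQd1 : ∫ t in a..ρ, phi σ₀ 1 ρ t * (1 / Real.log t)
      = (∫ t in a..ρ, phi σ₀ 1 ρ t) * (1 / L)
        + ∫ t in a..ρ, phi σ₀ 1 ρ t * (1 / Real.log t - 1 / L) := by
    rw [← intervalIntegral.integral_mul_const, ← intervalIntegral.integral_add]
    · apply intervalIntegral.integral_congr
      intro t ht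
      ring
    · apply ContinuousOn.intervalIntegrable
      apply ContinuousOn.mul
      · apply continuousOn_phi
        intro t ht
        rw [Set.uIcc_of_le hea] at ht
        exact lt_of_lt_of_le hapos ht.1
      · exact continuousOn_const
    · apply ContinuousOn.intervalIntegrable
      apply ContinuousOn.mul
      · apply continuousOn_phi
        intro t ht
        rw [Set.uIcc_of_le hea] at ht
        exact lt_of_lt_of_le hapos ht.1
      · apply ContinuousOn.sub
        · apply hclog.mono
          intro t ht
          rw [Set.uIcc_of_le hea] at ht
          exact lt_of_lt_of_le h1a ht.1
        · exact continuousOn_const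
  have hQd2 : ∫ t in ρ..b, phi σ₀ (-1) ρ t * (1 / Real.log t)
      = (∫ t in ρ..b, phi σ₀ (-1) ρ t) * (1 / L)
        + ∫ t in ρ..b, phi σ₀ (-1) ρ t * (1 / Real.log t - 1 / L) := by
    rw [← intervalIntegral.integral_mul_const, ← intervalIntegral.integral_add]
    · apply intervalIntegral.integral_congr
      intro t ht
      ring
    · apply ContinuousOn.intervalIntegrable
      apply ContinuousOn.mul
      · apply continuousOn_phi
        intro t ht
        rw [Set.uIcc_of_le heb] at ht
        exact lt_of_lt_of_le hρpos ht.1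
      · exact continuousOn_const
    · apply ContinuousOn.intervalIntegrable
      apply ContinuousOn.mul
      · apply continuousOn_phi
        intro t ht
        rw [Set.uIcc_of_le heb] at ht
        exact lt_of_lt_of_le hρpos ht.1
      · apply ContinuousOn.sub
        · apply hclog.mono
          intro t ht
          rw [Set.uIcc_of_le heb] at ht
          exact lt_of_lt_of_le h1a (le_trans hea ht.1)
        · exact continuousOn_const
  -- value of the main-term integral
  have hJval : (∫ t in a..ρ, phi σ₀ 1 ρ t) + (∫ t in ρ..b, phi σ₀ (-1) ρ t)
      = Csigma σ₀ * ρ ^ (1 - σ₀) := by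
    have := phi_integral σ₀ ρ ⟨hσl, hσu⟩ hρpos
    rw [← hadef, ← hbdef] at this
    exact this
  -- pointwise bounds on [a, b]
  have hlogt : ∀ t ∈ Set.Icc a b, L - 1 ≤ Real.log t ∧ Real.log t ≤ L + 1 := by
    intro t ht
    constructor
    · rw [← hloga]; exact Real.log_le_log hapos ht.1
    · rw [← hlogb]; exact Real.log_le_log (lt_of_lt_of_le hapos ht.1) ht.2
  have hinvlog : ∀ u : ℝ, L - 1 ≤ u → u ≤ L + 1 → |1 / u - 1 / L| ≤ 2 / L ^ 2 := by
    intro u h1 h2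
    have hu : 0 < u := by linarith
    have habs : |L - u| ≤ 1 := abs_le.mpr ⟨by linarith, by linarith⟩
    have heq : 1 / u - 1 / L = (L - u) / (u * L) := by
      field_simp
    rw [heq, abs_div, abs_of_pos (mul_pos hu hLpos),
      div_le_div_iff₀ (mul_pos hu hLpos) (by positivity)]
    have h3 : |L - u| * L ^ 2 ≤ 1 * L ^ 2 :=
      mul_le_mul_of_nonneg_right habs (by positivity)
    have h4 : L * L ≤ 2 * u * L := mul_le_mul_of_nonneg_right (by linarith) hLpos.le
    have h5 : L ^ 2 = L * L := sq L
    linarith [h3, h4]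
  have htB : ∀ t ∈ Set.Icc a b, t ^ (-σ₀) ≤ 3 * ρ ^ (-σ₀) := by
    intro t ht
    have h1 : t ^ (-σ₀) ≤ a ^ (-σ₀) :=
      Real.rpow_le_rpow_of_nonpos hapos ht.1 (neg_nonpos.mpr hσ0.le)
    rw [hrpowa (-σ₀), neg_neg] at h1
    nlinarith only [h1, hexpσ, hρσpos]
  have htB' : ∀ t ∈ Set.Icc a b, t ^ (-σ₀ - 1) ≤ 9 * ρ ^ (-σ₀ - 1) := by
    intro t ht
    have h1 : t ^ (-σ₀ - 1) ≤ a ^ (-σ₀ - 1) :=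
      Real.rpow_le_rpow_of_nonpos hapos ht.1 (by linarith)
    rw [hrpowa (-σ₀ - 1), show -(-σ₀ - 1) = σ₀ + 1 by ring] at h1
    nlinarith only [h1, hexpσ1, hρσ1pos]
  have hphiB : ∀ ε t : ℝ, |ε| ≤ 1 → t ∈ Set.Icc a b → |phi σ₀ ε ρ t| ≤ 6 * ρ ^ (-σ₀) := by
    intro ε t hε ht
    have htpos : 0 < t := lt_of_lt_of_le hapos ht.1
    obtain ⟨hl1, hl2⟩ := hlogt t ht
    have hfac : |1 + ε * (Real.log t - Real.log ρ)| ≤ 2 := by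
      rw [← hLdef]
      have hmm : |ε * (Real.log t - L)| ≤ 1 := by
        rw [abs_mul]
        have h1 : |Real.log t - L| ≤ 1 := abs_le.mpr ⟨by linarith only [hl1], by linarith only [hl2]⟩
        nlinarith only [hε, h1, abs_nonneg ε, abs_nonneg (Real.log t - L)]
      have h2' := abs_le.mp hmm
      exact abs_le.mpr ⟨by linarith only [h2'], by linarith only [h2']⟩
    rw [phi, abs_mul, abs_of_pos (Real.rpow_pos_of_pos htpos _)]
    nlinarith only [hfac, htB t ht, Real.rpow_pos_of_pos htpos (-σ₀), hρσpos, abs_nonneg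
      (1 + ε * (Real.log t - Real.log ρ))]
  have hphi'B : ∀ ε t : ℝ, |ε| ≤ 1 → t ∈ Set.Icc a b → |phi' σ₀ ε ρ t| ≤ 27 * ρ ^ (-σ₀ - 1) := by
    intro ε t hε ht
    have htpos : 0 < t := lt_of_lt_of_le hapos ht.1
    obtain ⟨hl1, hl2⟩ := hlogt t ht
    have hfac : |ε - σ₀ * (1 + ε * (Real.log t - Real.log ρ))| ≤ 3 := by
      rw [← hLdef]
      have h1 : |Real.log t - L| ≤ 1 := abs_le.mpr ⟨by linarith only [hl1], by linarith only [hl2]⟩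
      have h2 : |ε * (Real.log t - L)| ≤ 1 := by
        rw [abs_mul]
        nlinarith only [hε, h1, abs_nonneg ε, abs_nonneg (Real.log t - L)]
      have h2' := abs_le.mp h2
      have h3' := abs_le.mp hε
      have h4 : |1 + ε * (Real.log t - L)| ≤ 2 :=
        abs_le.mpr ⟨by linarith only [h2'], by linarith only [h2']⟩
      have h5 : |σ₀ * (1 + ε * (Real.log t - L))| ≤ 2 := by
        rw [abs_mul, abs_of_pos hσ0]
        nlinarith only [hσ0, hσu, h4, abs_nonneg (1 + ε * (Real.log t - L))]
      have h5' := abs_le.mp h5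
      exact abs_le.mpr ⟨by linarith only [h5', h3'], by linarith only [h5', h3']⟩
    rw [phi', abs_mul, abs_of_pos (Real.rpow_pos_of_pos htpos _)]
    nlinarith only [hfac, htB' t ht, Real.rpow_pos_of_pos htpos (-σ₀ - 1), hρσ1pos,
      abs_nonneg (ε - σ₀ * (1 + ε * (Real.log t - Real.log ρ)))]
  have hEB : ∀ t ∈ Set.Icc a b, |E t| ≤ 12 * |K| * ρ / L ^ 2 := by
    intro t ht
    have htpos : 0 < t := lt_of_lt_of_le hapos ht.1
    obtain ⟨hl1, hl2⟩ := hlogt t ht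
    have h1 := hE t (le_trans hax₀ ht.1) htpos.le
    have h2 : t / (Real.log t) ^ 2 ≤ 12 * ρ / L ^ 2 := by
      rw [div_le_div_iff₀ (by nlinarith only [hl1, hL2]) (by positivity)]
      have hlt : L / 2 ≤ Real.log t := by linarith only [hl1, hL2]
      have hsq : (L / 2) * (L / 2) ≤ Real.log t * Real.log t :=
        mul_le_mul hlt hlt (by linarith only [hL2]) (by linarith only [hl1, hL2])
      have h6 : t * L ^ 2 ≤ 3 * ρ * L ^ 2 :=
        mul_le_mul_of_nonneg_right (by linarith only [ht.2, hb3]) (sq_nonneg L)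
      have h7 : 12 * ρ * ((L / 2) * (L / 2)) ≤ 12 * ρ * (Real.log t * Real.log t) :=
        mul_le_mul_of_nonneg_left hsq (by positivity)
      nlinarith only [h6, h7]
    calc |E t| ≤ |K| * (t / (Real.log t) ^ 2) := h1
      _ ≤ |K| * (12 * ρ / L ^ 2) := mul_le_mul_of_nonneg_left h2 (abs_nonneg K)
      _ = 12 * |K| * ρ / L ^ 2 := by ring
  -- bound the two error integrals
  have hsubI1 : Set.Ioc a ρ ⊆ Set.Icc a b := fun t ht => ⟨ht.1.le, le_trans ht.2 heb⟩
  have hsubI2 : Set.Ioc ρ b ⊆ Set.Icc a b := fun t ht => ⟨le_trans hea ht.1.le, ht.2⟩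
  have hI1Eb : |∫ t in Set.Ioc a ρ, phi' σ₀ 1 ρ t * E t|
      ≤ 648 * |K| * (ρ ^ (1 - σ₀) / L ^ 2) := by
    have hb1 : ∀ t ∈ Set.Ioc a ρ, ‖phi' σ₀ 1 ρ t * E t‖
        ≤ 27 * ρ ^ (-σ₀ - 1) * (12 * |K| * ρ / L ^ 2) := by
      intro t ht
      rw [Real.norm_eq_abs, abs_mul]
      exact mul_le_mul (hphi'B 1 t (by norm_num) (hsubI1 ht)) (hEB t (hsubI1 ht)) (abs_nonneg _)
        (by positivity)
    have := MeasureTheory.norm_setIntegral_le_of_norm_le_const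
      (μ := MeasureTheory.volume) (s := Set.Ioc a ρ) measure_Ioc_lt_top hb1
    rw [Real.norm_eq_abs] at this
    rw [MeasureTheory.measureReal_def, Real.volume_Ioc, ENNReal.toReal_ofReal (by linarith)] at this
    calc |∫ t in Set.Ioc a ρ, phi' σ₀ 1 ρ t * E t|
        ≤ 27 * ρ ^ (-σ₀ - 1) * (12 * |K| * ρ / L ^ 2) * (ρ - a) := this
      _ ≤ 27 * ρ ^ (-σ₀ - 1) * (12 * |K| * ρ / L ^ 2) * (2 * ρ) := by
          apply mul_le_mul_of_nonneg_left (by linarith) (by positivity)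
      _ = 648 * |K| * (ρ ^ (-σ₀ - 1) * ρ * ρ / L ^ 2) := by ring
      _ = 648 * |K| * (ρ ^ (1 - σ₀) / L ^ 2) := by rw [hrr2]
  have hI2Eb : |∫ t in Set.Ioc ρ b, phi' σ₀ (-1) ρ t * E t|
      ≤ 648 * |K| * (ρ ^ (1 - σ₀) / L ^ 2) := by
    have hb1 : ∀ t ∈ Set.Ioc ρ b, ‖phi' σ₀ (-1) ρ t * E t‖
        ≤ 27 * ρ ^ (-σ₀ - 1) * (12 * |K| * ρ / L ^ 2) := by
      intro t ht
      rw [Real.norm_eq_abs, abs_mul]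
      exact mul_le_mul (hphi'B (-1) t (by norm_num) (hsubI2 ht)) (hEB t (hsubI2 ht))
        (abs_nonneg _) (by positivity)
    have := MeasureTheory.norm_setIntegral_le_of_norm_le_const
      (μ := MeasureTheory.volume) (s := Set.Ioc ρ b) measure_Ioc_lt_top hb1
    rw [Real.norm_eq_abs] at this
    rw [MeasureTheory.measureReal_def, Real.volume_Ioc, ENNReal.toReal_ofReal (by linarith)] at this
    calc |∫ t in Set.Ioc ρ b, phi' σ₀ (-1) ρ t * E t|
        ≤ 27 * ρ ^ (-σ₀ - 1) * (12 * |K| * ρ / L ^ 2) * (b - ρ) := this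
      _ ≤ 27 * ρ ^ (-σ₀ - 1) * (12 * |K| * ρ / L ^ 2) * (2 * ρ) := by
          apply mul_le_mul_of_nonneg_left (by linarith) (by positivity)
      _ = 648 * |K| * (ρ ^ (-σ₀ - 1) * ρ * ρ / L ^ 2) := by ring
      _ = 648 * |K| * (ρ ^ (1 - σ₀) / L ^ 2) := by rw [hrr2]
  -- bound the two main-term remainder integrals
  have hD1b : |∫ t in a..ρ, phi σ₀ 1 ρ t * (1 / Real.log t - 1 / L)|
      ≤ 24 * (ρ ^ (1 - σ₀) / L ^ 2) := by
    have hb1 : ∀ t ∈ Set.uIoc a ρ, ‖phi σ₀ 1 ρ t * (1 / Real.log t - 1 / L)‖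
        ≤ 6 * ρ ^ (-σ₀) * (2 / L ^ 2) := by
      intro t ht
      rw [Set.uIoc_of_le hea] at ht
      obtain ⟨hl1, hl2⟩ := hlogt t (hsubI1 ht)
      rw [Real.norm_eq_abs, abs_mul]
      exact mul_le_mul (hphiB 1 t (by norm_num) (hsubI1 ht)) (hinvlog _ hl1 hl2)
        (abs_nonneg _) (by positivity)
    have := intervalIntegral.norm_integral_le_of_norm_le_const hb1
    rw [Real.norm_eq_abs] at this
    calc |∫ t in a..ρ, phi σ₀ 1 ρ t * (1 / Real.log t - 1 / L)|
        ≤ 6 * ρ ^ (-σ₀) * (2 / L ^ 2) * |ρ - a| := this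
      _ ≤ 6 * ρ ^ (-σ₀) * (2 / L ^ 2) * (2 * ρ) := by
          apply mul_le_mul_of_nonneg_left ?_ (by positivity)
          rw [abs_of_nonneg (by linarith)]
          linarith
      _ = 24 * (ρ ^ (-σ₀) * ρ / L ^ 2) := by ring
      _ = 24 * (ρ ^ (1 - σ₀) / L ^ 2) := by rw [hrr1]
  have hD2b : |∫ t in ρ..b, phi σ₀ (-1) ρ t * (1 / Real.log t - 1 / L)|
      ≤ 24 * (ρ ^ (1 - σ₀) / L ^ 2) := by
    have hb1 : ∀ t ∈ Set.uIoc ρ b, ‖phi σ₀ (-1) ρ t * (1 / Real.log t - 1 / L)‖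
        ≤ 6 * ρ ^ (-σ₀) * (2 / L ^ 2) := by
      intro t ht
      rw [Set.uIoc_of_le heb] at ht
      obtain ⟨hl1, hl2⟩ := hlogt t (hsubI2 ht)
      rw [Real.norm_eq_abs, abs_mul]
      exact mul_le_mul (hphiB (-1) t (by norm_num) (hsubI2 ht)) (hinvlog _ hl1 hl2)
        (abs_nonneg _) (by positivity)
    have := intervalIntegral.norm_integral_le_of_norm_le_const hb1
    rw [Real.norm_eq_abs] at this
    calc |∫ t in ρ..b, phi σ₀ (-1) ρ t * (1 / Real.log t - 1 / L)|
        ≤ 6 * ρ ^ (-σ₀) * (2 / L ^ 2) * |b - ρ| := this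
      _ ≤ 6 * ρ ^ (-σ₀) * (2 / L ^ 2) * (2 * ρ) := by
          apply mul_le_mul_of_nonneg_left ?_ (by positivity)
          rw [abs_of_nonneg (by linarith)]
          linarith
      _ = 24 * (ρ ^ (-σ₀) * ρ / L ^ 2) := by ring
      _ = 24 * (ρ ^ (1 - σ₀) / L ^ 2) := by rw [hrr1]
  -- assemble the identity
  have hS : (∑ p ∈ primesNear ρ, ‖aL p‖ ^ 2 * weight ρ p / (p : ℝ) ^ σ₀)
      = -(∫ t in Set.Ioc a ρ, phi' σ₀ 1 ρ t * N t)
        - ∫ t in Set.Ioc ρ b, phi' σ₀ (-1) ρ t * N t := by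
    rw [hsplit, habel1, habel2, hphia, hphib, hphiρ]; ring
  have hP1 : (∫ t in a..ρ, phi' σ₀ 1 ρ t * Li t)
      = phi σ₀ (-1) ρ ρ * Li ρ - ∫ t in a..ρ, phi σ₀ 1 ρ t * (1 / Real.log t) := by
    rw [hphiρ, hphia] at hparts1
    linarith [hparts1]
  have hP2 : (∫ t in ρ..b, phi' σ₀ (-1) ρ t * Li t)
      = -(phi σ₀ (-1) ρ ρ * Li ρ) - ∫ t in ρ..b, phi σ₀ (-1) ρ t * (1 / Real.log t) := by
    rw [hphib] at hparts2
    linarith [hparts2]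
  have hkey : (∑ p ∈ primesNear ρ, ‖aL p‖ ^ 2 * weight ρ p / (p : ℝ) ^ σ₀)
      - Csigma σ₀ * κ * ρ ^ (1 - σ₀) / L
      = κ * (∫ t in a..ρ, phi σ₀ 1 ρ t * (1 / Real.log t - 1 / L))
        + κ * (∫ t in ρ..b, phi σ₀ (-1) ρ t * (1 / Real.log t - 1 / L))
        - (∫ t in Set.Ioc a ρ, phi' σ₀ 1 ρ t * E t)
        - ∫ t in Set.Ioc ρ b, phi' σ₀ (-1) ρ t * E t := by
    rw [hS, hdecomp1, hdecomp2, hP1, hP2, hQd1, hQd2]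
    linear_combination (κ / L) * hJval
  -- final estimate
  have hPnn : (0:ℝ) ≤ ρ ^ (1 - σ₀) / L ^ 2 := by positivity
  rw [Real.norm_eq_abs, Real.norm_eq_abs, hkey, abs_of_nonneg hPnn]
  have c1 := abs_le.mp hD1b
  have c2 := abs_le.mp hD2b
  have c3 := abs_le.mp hI1Eb
  have c4 := abs_le.mp hI2Eb
  have d1 := mul_le_mul_of_nonneg_left c1.2 hκ.le
  have d1' := mul_le_mul_of_nonneg_left c1.1 hκ.le
  have d2 := mul_le_mul_of_nonneg_left c2.2 hκ.le
  have d2' := mul_le_mul_of_nonneg_left c2.1 hκ.le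
  rw [abs_le]
  constructor
  · linarith only [d1', d2', c3.2, c4.2, hPnn]
  · linarith only [d1, d2, c3.1, c4.1, hPnn]
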